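/- arXiv:2307.07275 — 2 statements merged into one kernel-verified Lean document; each statement's English description precedes it below -/
import Mathlib

section
/- Let 0 < i ≤ n and let G be a simple connected graph on n vertices realizing S_{i,n}. Then the graph (G ∪ 2K1) ∨ K1 on n+3 vertices realizes S_{{i+1,n+2}_{n+3}^1}. In particular, if S_{i,n} is Laplacian realizable, then so is S_{{i+1,n+2}_{n+3}^1}. -/
open SimpleGraph

/-- The join of two graphs: disjoint union plus all edges between the two parts. -/
def graphJoin {α β : Type} (G : SimpleGraph α) (H : SimpleGraph β) :
    SimpleGraph (α ⊕ β) where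
  Adj u v := match u, v with
    | Sum.inl u, Sum.inl v => G.Adj u v
    | Sum.inr u, Sum.inr v => H.Adj u v
    | Sum.inl _, Sum.inr _ => True
    | Sum.inr _, Sum.inl _ => True
  symm := ⟨fun u v => by cases u <;> cases v <;> simp [G.adj_symm, H.adj_symm] <;> exact fun h => h.symm⟩
  loopless := ⟨fun u => by cases u <;> simp⟩

/-- The Laplacian spectrum of a finite graph, as the multiset of roots (with multiplicity)
of the characteristic polynomial of its Laplacian matrix over `ℝ`. -/
noncomputable def lapSpec {V : Type} [Fintype V] [DecidableEq V] (G : SimpleGraph V) :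
    Multiset ℝ :=
  letI := Classical.decRel G.Adj
  (G.lapMatrix ℝ).charpoly.roots

/-- `G` realizes the multiset `s` if `G` is connected and its Laplacian spectrum is `s`. -/
def Realizes {V : Type} [Fintype V] [DecidableEq V] (G : SimpleGraph V) (s : Multiset ℝ) :
    Prop :=
  G.Connected ∧ lapSpec G = s

/-- The multiset `S_{{i,j}_n^m}`: `{0,1,…,n}` with the element `m` doubled and `i`, `j` removed. -/
noncomputable def SijSet (n i j m : ℕ) : Multiset ℝ :=
  (m : ℝ) ::ₘ (((Multiset.range (n + 1)).map (fun k => (k : ℝ))) - {(i : ℝ), (j : ℝ)})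

/-- The multiset `S_{i,n} = {0,1,…,n} \ {i}`. -/
noncomputable def SinSet (i n : ℕ) : Multiset ℝ :=
  ((Multiset.range (n + 1)).map (fun k => (k : ℝ))) - {(i : ℝ)}

/-- The set `S_{{i,j}_n^m}` is Laplacian realizable. -/
def LapRealizable (n i j m : ℕ) : Prop :=
  ∃ G : SimpleGraph (Fin n), Realizes G (SijSet n i j m)

/-! ### Multiset lemmas -/
section Multisets
open Multiset

lemma cast_inj' : Function.Injective (fun k : ℕ => (k : ℝ)) :=
  fun a b h => Nat.cast_injective h

lemma SinSet_def' (i n : ℕ) :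
    SinSet i n = (Multiset.range (n+1)).map (fun k : ℕ => (k : ℝ)) - {(i:ℝ)} := by
  rw [SinSet]; congr 1; simp [Multiset.bind_singleton]

lemma SijSet_def' (n i j m : ℕ) :
    SijSet n i j m =
      (m : ℝ) ::ₘ ((Multiset.range (n+1)).map (fun k : ℕ => (k : ℝ)) - {(i:ℝ), (j:ℝ)}) := by
  rw [SijSet]; congr 2; simp [Multiset.bind_singleton]

lemma range_map_succ (m : ℕ) : (0 : ℕ) ::ₘ (range m).map (· + 1) = range (m + 1) := by
  induction m with
  | zero => simp
  | succ k ih =>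
    rw [range_succ, Multiset.map_cons, Multiset.cons_swap, ih, ← range_succ]

lemma nat_multiset_id {n i : ℕ} (hin : i ≤ n) :
    (0 : ℕ) ::ₘ (n+3) ::ₘ 1 ::ₘ (((range (n+1)).erase i).map (· + 1)) =
      1 ::ₘ (((range (n+4)).erase (i+1)).erase (n+2)) := by
  have hmap : (0:ℕ) ::ₘ ((range (n+1)).erase i).map (· + 1) = ((range (n+2)).erase (i+1)) := by
    rw [Multiset.map_erase _ (fun a b => by omega) i, ← range_map_succ (n+1),
      Multiset.erase_cons_tail _ (by omega)]
  have h4 : range (n+4) = (n+3) ::ₘ (n+2) ::ₘ range (n+2) := by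
    rw [show n+4 = (n+3)+1 from rfl, range_succ, show n+3 = (n+2)+1 from rfl, range_succ]
  rw [h4, Multiset.erase_cons_tail _ (by omega : (n+3:ℕ) ≠ (i+1)),
    Multiset.erase_cons_tail _ (by omega : (n+2:ℕ) ≠ (i+1)),
    Multiset.erase_cons_tail _ (by omega : (n+3:ℕ) ≠ (n+2)), Multiset.erase_cons_head,
    Multiset.cons_swap (0:ℕ), Multiset.cons_swap (0:ℕ) 1, hmap, Multiset.cons_swap]

lemma SinSet_eq_map (i n : ℕ) :
    SinSet i n = ((range (n+1)).erase i).map (fun k : ℕ => (k : ℝ)) := by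
  rw [SinSet_def', Multiset.sub_singleton]
  exact (Multiset.map_erase (fun k : ℕ => (k : ℝ)) cast_inj' i _).symm

lemma SinSet_card {i n : ℕ} (hin : i ≤ n) : Multiset.card (SinSet i n) = n := by
  rw [SinSet_eq_map, Multiset.card_map, Multiset.card_erase_of_mem (by simp; omega),
    Multiset.card_range]
  rfl

lemma real_multiset_id {n i : ℕ} (hin : i ≤ n) :
    (0:ℝ) ::ₘ ((n:ℝ)+3) ::ₘ (1:ℝ) ::ₘ ((SinSet i n).map (· + 1)) =
      SijSet (n+3) (i+1) (n+2) 1 := by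
  have h1 : (SinSet i n).map (· + 1) =
      (((range (n+1)).erase i).map (· + 1)).map (fun k : ℕ => (k : ℝ)) := by
    rw [SinSet_eq_map i n, Multiset.map_map, Multiset.map_map]
    exact Multiset.map_congr rfl (fun x _ => by simp [Function.comp])
  have h2 : SijSet (n+3) (i+1) (n+2) 1 =
      (1:ℝ) ::ₘ ((((range (n+4)).erase (i+1)).erase (n+2)).map (fun k : ℕ => (k : ℝ))) := by
    rw [SijSet_def',
      show ({((i+1:ℕ) : ℝ), ((n+2:ℕ):ℝ)} : Multiset ℝ) = ((i+1:ℕ):ℝ) ::ₘ {((n+2:ℕ):ℝ)} from rfl,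
      Multiset.sub_cons, Multiset.sub_singleton,
      ← Multiset.map_erase (fun k : ℕ => (k : ℝ)) cast_inj' (i+1) _,
      ← Multiset.map_erase (fun k : ℕ => (k : ℝ)) cast_inj' (n+2) _]
    norm_num
  have h3 := congrArg (Multiset.map (fun k : ℕ => (k:ℝ))) (nat_multiset_id hin)
  simp only [Multiset.map_cons] at h3
  push_cast at h3
  rw [h1, h2]
  exact_mod_cast h3

end Multisets

/-! ### Graph and Laplacian block lemmas -/
open SimpleGraph Matrix Finset

section
variable {α β : Type} [Fintype α] [Fintype β] [DecidableEq α] [DecidableEq β]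
variable (G : SimpleGraph α) (H : SimpleGraph β)

@[simp] lemma graphJoin_adj_inl_inl [DecidableRel G.Adj] (a b : α) :
    (graphJoin G H).Adj (Sum.inl a) (Sum.inl b) ↔ G.Adj a b := Iff.rfl
@[simp] lemma graphJoin_adj_inl_inr (a : α) (b : β) :
    (graphJoin G H).Adj (Sum.inl a) (Sum.inr b) := trivial
@[simp] lemma graphJoin_adj_inr_inl (a : β) (b : α) :
    (graphJoin G H).Adj (Sum.inr a) (Sum.inl b) := trivial
@[simp] lemma graphJoin_adj_inr_inr (a b : β) :
    (graphJoin G H).Adj (Sum.inr a) (Sum.inr b) ↔ H.Adj a b := Iff.rfl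

lemma degree_eq_sum {V : Type} [Fintype V] [DecidableEq V] (G : SimpleGraph V)
    [DecidableRel G.Adj] (v : V) :
    G.degree v = ∑ u, if G.Adj v u then 1 else 0 := by
  rw [degree, neighborFinset_eq_filter, Finset.card_filter]

lemma degree_sum_inl [DecidableRel G.Adj] [DecidableRel (G ⊕g H).Adj] (a : α) :
    (G ⊕g H).degree (Sum.inl a) = G.degree a := by
  rw [degree_eq_sum, degree_eq_sum, Fintype.sum_sum_type]
  simp

lemma degree_sum_inr [DecidableRel H.Adj] [DecidableRel (G ⊕g H).Adj] (b : β) :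
    (G ⊕g H).degree (Sum.inr b) = H.degree b := by
  rw [degree_eq_sum, degree_eq_sum, Fintype.sum_sum_type]
  simp

lemma degree_join_inl [DecidableRel G.Adj] [DecidableRel (graphJoin G H).Adj] (a : α) :
    (graphJoin G H).degree (Sum.inl a) = G.degree a + Fintype.card β := by
  rw [degree_eq_sum, degree_eq_sum, Fintype.sum_sum_type]
  simp [Finset.card_univ]

lemma degree_join_inr [DecidableRel H.Adj] [DecidableRel (graphJoin G H).Adj] (b : β) :
    (graphJoin G H).degree (Sum.inr b) = H.degree b + Fintype.card α := by
  rw [degree_eq_sum, degree_eq_sum, Fintype.sum_sum_type]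
  simp [Finset.card_univ, add_comm]

lemma lapMatrix_sum [DecidableRel G.Adj] [DecidableRel H.Adj] [DecidableRel (G ⊕g H).Adj] :
    (G ⊕g H).lapMatrix ℝ = fromBlocks (G.lapMatrix ℝ) 0 0 (H.lapMatrix ℝ) := by
  ext (a|a) (b|b) <;>
    simp [lapMatrix, degMatrix, adjMatrix, fromBlocks, diagonal, degree_sum_inl, degree_sum_inr,
      Sum.inl.injEq, Sum.inr.injEq]

lemma lapMatrix_join_K1 [DecidableRel G.Adj]
    [DecidableRel (graphJoin G (⊥ : SimpleGraph (Fin 1))).Adj] :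
    (graphJoin G (⊥ : SimpleGraph (Fin 1))).lapMatrix ℝ =
      fromBlocks (G.lapMatrix ℝ + 1) (Matrix.of fun _ _ => -1) (Matrix.of fun _ _ => -1)
        (Matrix.of fun _ _ => (Fintype.card α : ℝ)) := by
  ext (a|a) (b|b)
  · simp [lapMatrix, degMatrix, adjMatrix, fromBlocks, diagonal, degree_join_inl,
      Matrix.one_apply]
    split_ifs <;> ring
  · simp [lapMatrix, degMatrix, adjMatrix, fromBlocks, diagonal]
  · simp [lapMatrix, degMatrix, adjMatrix, fromBlocks, diagonal]
  · have : a = b := Subsingleton.elim a b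
    subst this
    simp [lapMatrix, degMatrix, adjMatrix, fromBlocks, diagonal, degree_join_inr, SimpleGraph.bot_degree]
end
open Polynomial Matrix Finset

noncomputable abbrev FF := FractionRing (Polynomial ℝ)

lemma charpoly_add_one {V : Type} [Fintype V] [DecidableEq V] (M : Matrix V V ℝ) :
    (M + 1).charpoly = M.charpoly.comp (X - 1) := by
  have h : (M + 1).charmatrix = M.charmatrix.map (aeval (X - 1 : ℝ[X])).toRingHom := by
    ext i j
    by_cases hij : i = j
    · subst hij
      simp [charmatrix_apply_eq, Matrix.map_apply, map_sub, aeval_X, aeval_C]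
      ring
    · simp [charmatrix_apply_ne _ _ _ hij, Matrix.map_apply, Matrix.one_apply_ne hij, aeval_C]
  rw [Matrix.charpoly, h, ← RingHom.mapMatrix_apply, ← RingHom.map_det]
  rfl

lemma key_det {V : Type} [Fintype V] [DecidableEq V] (L1 : Matrix V V ℝ)
    (hrow : ∀ v, ∑ u, L1 v u = 0) :
    (X - 1 : ℝ[X]) *
        (fromBlocks (L1 + 1) (Matrix.of fun _ _ => -1) (Matrix.of fun _ _ => -1)
          (Matrix.of fun (_ _ : Fin 1) => ((Fintype.card V : ℝ))) : Matrix (V ⊕ Fin 1) _ ℝ).charpoly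
      = X * (X - C ((Fintype.card V : ℝ) + 1)) * (L1 + 1).charpoly := by
  set N := Fintype.card V with hN
  set f : ℝ[X] →+* FF := (algebraMap ℝ[X] FF) with hf
  have hfinj : Function.Injective f := IsFractionRing.injective _ _
  have ht1 : f X - 1 ≠ 0 := by
    intro h
    have h2 : X - 1 = (0:ℝ[X]) := by
      apply hfinj
      rw [map_sub, map_zero, f.map_one]
      exact h
    have h3 : X - C 1 = (0:ℝ[X]) := by rwa [C_1]
    exact X_sub_C_ne_zero (1:ℝ) h3
  have hB : -((Matrix.of fun (_:V) (_:Fin 1) => (-1:ℝ)).map (⇑(C : ℝ →+* ℝ[X])))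
      = (Matrix.of fun _ _ => (1:ℝ[X])) := by
    ext i j : 2
    simp [Matrix.map_apply]
  have hC : -((Matrix.of fun (_:Fin 1) (_:V) => (-1:ℝ)).map (⇑(C : ℝ →+* ℝ[X])))
      = (Matrix.of fun _ _ => (1:ℝ[X])) := by
    ext i j : 2
    simp [Matrix.map_apply]
  have hchm : (fromBlocks (L1 + 1) (Matrix.of fun _ _ => -1) (Matrix.of fun _ _ => -1)
        (Matrix.of fun (_ _ : Fin 1) => ((N : ℝ))) : Matrix (V ⊕ Fin 1) _ ℝ).charmatrix
      = fromBlocks (L1 + 1).charmatrix (Matrix.of fun _ _ => (1:ℝ[X]))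
          (Matrix.of fun _ _ => (1:ℝ[X]))
          ((Matrix.of fun (_ _ : Fin 1) => ((N : ℝ))).charmatrix) := by
    rw [charmatrix_fromBlocks, hB, hC]
  set AF : Matrix V V FF := ((L1 + 1).charmatrix).map f with hAF
  have hdetAF : AF.det = f ((L1 + 1).charpoly) := by
    rw [Matrix.charpoly, RingHom.map_det, RingHom.mapMatrix_apply]
  have hphi : (L1 + 1).charpoly ≠ 0 := (Matrix.charpoly_monic _).ne_zero
  have hAFdet : IsUnit AF.det := by
    rw [hdetAF, isUnit_iff_ne_zero]
    intro h
    exact hphi (hfinj (by rw [h, map_zero]))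
  letI : Invertible AF := Matrix.invertibleOfIsUnitDet AF hAFdet
  have hrowAF : ∀ v, ∑ u, AF v u = f X - 1 := by
    intro v
    have h1 : ∑ u, (L1 + 1).charmatrix v u = X - 1 := by
      simp only [charmatrix_apply, Finset.sum_sub_distrib, ← map_sum]
      have hd : ∑ u, (Matrix.diagonal fun _ : V => (X:ℝ[X])) v u = X := by
        simp [Matrix.diagonal_apply]
      have hr : ∑ u, (L1 + 1) v u = 1 := by
        simp only [Matrix.add_apply, Finset.sum_add_distrib, hrow v]
        simp [Matrix.one_apply]
      rw [hd, hr, C_1]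
    calc ∑ u, AF v u = f (∑ u, (L1 + 1).charmatrix v u) := by rw [map_sum]; rfl
      _ = f X - 1 := by rw [h1, map_sub, f.map_one]
  have hinv : ∀ a, ∑ u, (⅟AF) a u = (f X - 1)⁻¹ := by
    intro a
    have h1 : ∑ a', (⅟AF * AF) a a' = 1 := by
      rw [invOf_mul_self]
      simp [Matrix.one_apply]
    have h2 : ∑ a', (⅟AF * AF) a a' = (∑ u, (⅟AF) a u) * (f X - 1) := by
      simp only [Matrix.mul_apply]
      rw [Finset.sum_comm, Finset.sum_mul]
      apply Finset.sum_congr rfl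
      intro u _
      rw [← Finset.mul_sum, hrowAF u]
    have h3 : (f X - 1) * (∑ u, (⅟AF) a u) = 1 := by
      rw [mul_comm, ← h2]; exact h1
    exact eq_inv_of_mul_eq_one_right h3
  apply hfinj
  rw [f.map_mul, f.map_mul, f.map_mul, Matrix.charpoly, RingHom.map_det, RingHom.mapMatrix_apply, hchm,
    Matrix.fromBlocks_map, Matrix.det_fromBlocks₁₁]
  have hBF : ((Matrix.of fun (_:V) (_:Fin 1) => (1:ℝ[X])).map f) = Matrix.of fun _ _ => (1:FF) := by
    ext i j : 2; simp [Matrix.map_apply]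
  have hCF : ((Matrix.of fun (_:Fin 1) (_:V) => (1:ℝ[X])).map f) = Matrix.of fun _ _ => (1:FF) := by
    ext i j : 2; simp [Matrix.map_apply]
  rw [hBF, hCF]
  have hcorner : ((((Matrix.of fun (_ _ : Fin 1) => ((N : ℝ))).charmatrix).map f) -
      (Matrix.of fun (_:Fin 1) (_:V) => (1:FF)) * ⅟AF *
        (Matrix.of fun (_:V) (_:Fin 1) => (1:FF))).det
      = (f X - (N:FF)) - (N:FF) * (f X - 1)⁻¹ := by
    rw [Matrix.det_unique]
    have hm : ((Matrix.of fun (_:Fin 1) (_:V) => (1:FF)) * ⅟AF *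
        (Matrix.of fun (_:V) (_:Fin 1) => (1:FF))) default default = (N:FF) * (f X - 1)⁻¹ := by
      simp only [Matrix.mul_apply, Matrix.of_apply, one_mul, mul_one]
      calc ∑ x : V, ∑ w : V, (⅟AF) w x = ∑ w : V, ∑ x : V, (⅟AF) w x := Finset.sum_comm
        _ = ∑ w : V, (f X - 1)⁻¹ := Finset.sum_congr rfl (fun w _ => hinv w)
        _ = (N:FF) * (f X - 1)⁻¹ := by
            rw [Finset.sum_const, Finset.card_univ, nsmul_eq_mul]
    simp only [Matrix.sub_apply, Matrix.map_apply, charmatrix_apply_eq, Matrix.of_apply]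
    rw [hm, map_sub, C_eq_natCast, map_natCast]
  rw [hcorner, hdetAF]
  have hx1 : f (X - 1) = f X - 1 := by rw [map_sub, f.map_one]
  have hxN : f (X - C ((N:ℝ)+1)) = f X - ((N:FF) + 1) := by
    rw [map_sub]
    congr 1
    rw [map_add C, C_1, C_eq_natCast, map_add, map_natCast, f.map_one]
  rw [hx1, hxN]
  field_simp
  ring

/-! ### Assembly -/
open Polynomial Matrix Finset Multiset in
lemma lapMatrix_bot {β : Type} [Fintype β] [DecidableEq β]
    [DecidableRel (⊥ : SimpleGraph β).Adj] : (⊥ : SimpleGraph β).lapMatrix ℝ = 0 := by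
  have hd : ∀ x : β, (⊥ : SimpleGraph β).degree x = 0 := by
    intro x
    rw [degree_eq_sum]
    simp
  ext a b
  simp [lapMatrix, degMatrix, adjMatrix, Matrix.diagonal, hd]

open Polynomial Matrix in
lemma charpoly_zero_fin2 : (0 : Matrix (Fin 2) (Fin 2) ℝ).charpoly = X ^ 2 := by
  have h : (0 : Matrix (Fin 2) (Fin 2) ℝ).charmatrix = Matrix.diagonal (fun _ => (X : ℝ[X])) := by
    ext i j
    by_cases hij : i = j
    · subst hij; simp [charmatrix_apply_eq]
    · simp [charmatrix_apply_ne _ _ _ hij, Matrix.diagonal_apply_ne _ hij]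
  rw [Matrix.charpoly, h, Matrix.det_diagonal]
  simp [Finset.prod_const]

open Polynomial Matrix in
lemma join_connected {α : Type} [Fintype α] [DecidableEq α] (G1 : SimpleGraph α) :
    (graphJoin G1 (⊥ : SimpleGraph (Fin 1))).Connected := by
  rw [SimpleGraph.connected_iff_exists_forall_reachable]
  refine ⟨Sum.inr 0, fun w => ?_⟩
  cases w with
  | inl a => exact (graphJoin_adj_inr_inl G1 ⊥ 0 a).reachable
  | inr b =>
    have : b = 0 := Subsingleton.elim b 0
    subst this
    exact SimpleGraph.Reachable.refl _

open Polynomial Matrix Finset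

/-- If `G` on `n` vertices realizes `S_{i,n}`, then `(G ∪ 2K1) ∨ K1` realizes
`S_{{i+1,n+2}_{n+3}^1}`; in particular the latter set is Laplacian realizable. -/
theorem stmt2 {n i : ℕ} (hi : 0 < i) (hin : i ≤ n) (G : SimpleGraph (Fin n))
    (hG : Realizes G (SinSet i n)) :
    Realizes (graphJoin (G ⊕g (⊥ : SimpleGraph (Fin 2))) (⊥ : SimpleGraph (Fin 1)))
      (SijSet (n + 3) (i + 1) (n + 2) 1) ∧
    LapRealizable (n + 3) (i + 1) (n + 2) 1 := by
  classical
  set G1 := G ⊕g (⊥ : SimpleGraph (Fin 2)) with hG1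
  set H := graphJoin G1 (⊥ : SimpleGraph (Fin 1)) with hH
  -- the characteristic polynomial of G
  set φ := (G.lapMatrix ℝ).charpoly with hφdef
  have hroots : φ.roots = SinSet i n := hG.2
  have hmonic : φ.Monic := Matrix.charpoly_monic _
  have hdeg : φ.natDegree = n := by
    rw [hφdef, Matrix.charpoly_natDegree_eq_dim, Fintype.card_fin]
  have hsplit : (φ.roots.map (fun r => X - C r)).prod = φ :=
    Polynomial.prod_multiset_X_sub_C_of_monic_of_roots_card_eq hmonic
      (by rw [hroots, SinSet_card hin, hdeg])
  have hφ : φ = ((SinSet i n).map (fun r => X - C r)).prod := by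
    rw [← hsplit, hroots]
  -- charpoly of L1 = lapMatrix of G1
  set L1 := G1.lapMatrix ℝ with hL1def
  have hL1 : L1 = fromBlocks (G.lapMatrix ℝ) 0 0 (0 : Matrix (Fin 2) (Fin 2) ℝ) := by
    rw [hL1def, hG1, lapMatrix_sum, lapMatrix_bot]
  have hφ1 : L1.charpoly = φ * X ^ 2 := by
    rw [hL1, Matrix.charpoly_fromBlocks_zero₁₂, charpoly_zero_fin2]
  -- row sums of L1 vanish
  have hrow : ∀ v, ∑ u, L1 v u = 0 := by
    intro v
    have h0 := congrFun (SimpleGraph.lapMatrix_mulVec_const_eq_zero (R := ℝ) (G := G1)) v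
    simpa [Matrix.mulVec, dotProduct] using h0
  -- the key determinant identity
  have hLH : H.lapMatrix ℝ =
      fromBlocks (L1 + 1) (Matrix.of fun _ _ => -1) (Matrix.of fun _ _ => -1)
        (Matrix.of fun _ _ => (Fintype.card (Fin n ⊕ Fin 2) : ℝ)) := by
    rw [hH, lapMatrix_join_K1, hL1def]
  have hkey := key_det L1 hrow
  rw [← hLH] at hkey
  -- compute the comp
  have hcomp : φ.comp (X - 1) = (((SinSet i n).map (· + 1)).map (fun r => X - C r)).prod := by
    rw [hφ, Polynomial.comp_eq_aeval, map_multiset_prod, Multiset.map_map, Multiset.map_map]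
    apply congrArg
    apply Multiset.map_congr rfl
    intro r _
    simp only [Function.comp_apply, map_sub, aeval_X, aeval_C]
    rw [show (algebraMap ℝ ℝ[X]) r = C r from rfl]
    rw [map_add C, C_1]
    ring
  have hadd1 : (L1 + 1).charpoly = φ.comp (X - 1) * (X - 1) ^ 2 := by
    rw [charpoly_add_one, hφ1, Polynomial.mul_comp, Polynomial.pow_comp, Polynomial.X_comp]
  -- assemble and cancel X - 1
  have hX1ne : (X - 1 : ℝ[X]) ≠ 0 := by
    intro h
    exact Polynomial.X_sub_C_ne_zero (1:ℝ) (by rwa [C_1])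
  have hcards : ((Fintype.card (Fin n ⊕ Fin 2) : ℝ)) + 1 = (n:ℝ) + 3 := by
    simp [Fintype.card_sum]
    ring
  set s' := (SinSet i n).map (· + 1) with hs'
  have hcharH : (H.lapMatrix ℝ).charpoly =
      X * (X - C ((n:ℝ) + 3)) * (X - 1) * ((s'.map (fun r => X - C r)).prod) := by
    apply mul_left_cancel₀ hX1ne
    rw [hkey, hadd1, hcomp, hcards]
    ring
  have hfact : (H.lapMatrix ℝ).charpoly =
      (((0:ℝ) ::ₘ ((n:ℝ)+3) ::ₘ (1:ℝ) ::ₘ s').map (fun r => X - C r)).prod := by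
    rw [hcharH]
    simp only [Multiset.map_cons, Multiset.prod_cons, map_zero, C_0, C_1, sub_zero]
    ring
  have hspec : lapSpec H = SijSet (n+3) (i+1) (n+2) 1 := by
    show (H.lapMatrix ℝ).charpoly.roots = _
    rw [hfact, Polynomial.roots_multiset_prod_X_sub_C, hs', real_multiset_id hin]
  have hreal : Realizes H (SijSet (n+3) (i+1) (n+2) 1) := ⟨join_connected G1, hspec⟩
  refine ⟨hreal, ?_⟩
  -- transfer along an equivalence to `Fin (n+3)`
  have hcard : Fintype.card ((Fin n ⊕ Fin 2) ⊕ Fin 1) = n + 3 := by simp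
  set e : Fin (n+3) ≃ ((Fin n ⊕ Fin 2) ⊕ Fin 1) := (Fintype.equivFinOfCardEq hcard).symm with he
  set G' : SimpleGraph (Fin (n+3)) := H.comap e.toEmbedding with hG'
  have hiso : G' ≃g H := SimpleGraph.Iso.comap e H
  have hdeg' : ∀ v, G'.degree v = H.degree (e v) := by
    intro v
    rw [degree_eq_sum, degree_eq_sum]
    apply Fintype.sum_equiv e
    intro u
    simp [hG']
  have hmat : G'.lapMatrix ℝ = (H.lapMatrix ℝ).submatrix e e := by
    ext a b
    by_cases hab : a = b
    · subst hab
      simp [SimpleGraph.lapMatrix, SimpleGraph.degMatrix, SimpleGraph.adjMatrix,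
        Matrix.diagonal, Matrix.submatrix_apply, hdeg' a, hG']
    · have : e a ≠ e b := fun h => hab (e.injective h)
      simp [SimpleGraph.lapMatrix, SimpleGraph.degMatrix, SimpleGraph.adjMatrix,
        Matrix.diagonal, Matrix.submatrix_apply, hab, this, hG']
  have hspec' : lapSpec G' = lapSpec H := by
    show (G'.lapMatrix ℝ).charpoly.roots = (H.lapMatrix ℝ).charpoly.roots
    rw [hmat]
    have : (H.lapMatrix ℝ).submatrix e e = (Matrix.reindex e.symm e.symm) (H.lapMatrix ℝ) := by
      simp [Matrix.reindex_apply]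
    rw [this, Matrix.charpoly_reindex]
  exact ⟨G', ⟨hiso.connected_iff.mpr hreal.1, hspec'.trans hspec⟩⟩
end

section
/- Let 1 < i < n and suppose a simple connected graph G on n vertices realizes S_{{i,n}_n^1}. Then every vertex of G has degree at least 2 and at most n−3; in particular, G has no pendant vertex (vertex of degree one). -/
open SimpleGraph

/-! ### Auxiliary spectral theory -/

open Polynomial Matrix Finset

section CharpolyAux

variable {n : ℕ}

lemma my_charpoly_conj (U B V : Matrix (Fin n) (Fin n) ℝ) (hUV : U * V = 1) :
    (U * B * V).charpoly = B.charpoly := by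
  have hUV' : (C : ℝ →+* ℝ[X]).mapMatrix U * (C : ℝ →+* ℝ[X]).mapMatrix V = 1 := by
    rw [← _root_.map_mul, hUV, _root_.map_one]
  have hc : (C : ℝ →+* ℝ[X]).mapMatrix U * Matrix.scalar (Fin n) (X : ℝ[X])
      = Matrix.scalar (Fin n) (X : ℝ[X]) * (C : ℝ →+* ℝ[X]).mapMatrix U :=
    ((Matrix.scalar_commute (X : ℝ[X]) (fun r' => Commute.all _ _)
      ((C : ℝ →+* ℝ[X]).mapMatrix U)).symm).eq
  have key : charmatrix (U * B * V) =
      (C : ℝ →+* ℝ[X]).mapMatrix U * charmatrix B * (C : ℝ →+* ℝ[X]).mapMatrix V := by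
    rw [charmatrix, charmatrix, mul_sub, sub_mul]
    congr 1
    · rw [hc, mul_assoc, hUV', mul_one]
    · rw [_root_.map_mul, _root_.map_mul]
  unfold Matrix.charpoly
  rw [key, det_mul, det_mul, mul_right_comm, ← det_mul, hUV', det_one, one_mul]

lemma my_charpoly_diagonal (d : Fin n → ℝ) :
    (Matrix.diagonal d).charpoly = ∏ i, (X - C (d i)) := by
  unfold Matrix.charpoly
  have h : charmatrix (Matrix.diagonal d) = Matrix.diagonal (fun i => (X : ℝ[X]) - C (d i)) := by
    ext i j
    by_cases hij : i = j
    · subst hij; simp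
    · rw [charmatrix_apply_ne _ _ _ hij, Matrix.diagonal_apply_ne _ hij,
        Matrix.diagonal_apply_ne _ hij, map_zero, neg_zero]
  rw [h, det_diagonal]

lemma my_roots_hermitian {A : Matrix (Fin n) (Fin n) ℝ} (hA : A.IsHermitian) :
    A.charpoly.roots = Finset.univ.val.map hA.eigenvalues := by
  have hUmem := hA.eigenvectorUnitary.2
  have h1 : (hA.eigenvectorUnitary : Matrix (Fin n) (Fin n) ℝ) *
      star (hA.eigenvectorUnitary : Matrix (Fin n) (Fin n) ℝ) = 1 :=
    (Matrix.mem_unitaryGroup_iff).mp hUmem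
  have hsp := hA.spectral_theorem
  rw [RCLike.ofReal_real_eq_id] at hsp
  have h2 : A.charpoly = (Matrix.diagonal hA.eigenvalues).charpoly := by
    conv_lhs => rw [hsp]
    exact my_charpoly_conj _ _ _ h1
  rw [h2, my_charpoly_diagonal]
  rw [Polynomial.roots_prod _ _ (Polynomial.monic_prod_of_monic _ _
    (fun i _ => Polynomial.monic_X_sub_C (hA.eigenvalues i))).ne_zero]
  simp [Polynomial.roots_X_sub_C, Multiset.bind_map]

lemma my_quad_decomp {A : Matrix (Fin n) (Fin n) ℝ} (hA : A.IsHermitian)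
    (x : Fin n → ℝ) :
    ∃ y : Fin n → ℝ,
      x ⬝ᵥ x = ∑ k, (y k) ^ 2 ∧
      x ⬝ᵥ (A *ᵥ x) = ∑ k, hA.eigenvalues k * (y k) ^ 2 ∧
      ∀ k, y k = (fun j => (hA.eigenvectorBasis k : Fin n → ℝ) j) ⬝ᵥ x := by
  set U : Matrix (Fin n) (Fin n) ℝ := (hA.eigenvectorUnitary : Matrix (Fin n) (Fin n) ℝ) with hU
  have h1 : U * star U = 1 := (Matrix.mem_unitaryGroup_iff).mp hA.eigenvectorUnitary.2
  have hsp := hA.spectral_theorem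
  rw [RCLike.ofReal_real_eq_id] at hsp
  have hstar : star U = Uᵀ := by
    rw [Matrix.star_eq_conjTranspose, Matrix.conjTranspose_eq_transpose_of_trivial]
  have key : ∀ z w : Fin n → ℝ, (star U *ᵥ z) ⬝ᵥ w = z ⬝ᵥ (U *ᵥ w) := by
    intro z w
    rw [hstar, Matrix.mulVec_transpose, ← Matrix.dotProduct_mulVec]
  refine ⟨star U *ᵥ x, ?_, ?_, ?_⟩
  · have h2 : (star U *ᵥ x) ⬝ᵥ (star U *ᵥ x) = x ⬝ᵥ x := by
      rw [key, Matrix.mulVec_mulVec, h1, Matrix.one_mulVec]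
    rw [← h2]
    simp [dotProduct, sq]
  · have h3 : x ⬝ᵥ (A *ᵥ x)
        = (star U *ᵥ x) ⬝ᵥ (Matrix.diagonal (id ∘ hA.eigenvalues) *ᵥ (star U *ᵥ x)) := by
      rw [key, Matrix.mulVec_mulVec, Matrix.mulVec_mulVec]
      conv_lhs => rw [hsp]
      rfl
    rw [h3]
    have h4 : Matrix.diagonal (id ∘ hA.eigenvalues) *ᵥ (star U *ᵥ x)
        = fun k => hA.eigenvalues k * (star U *ᵥ x) k := by
      ext k; rw [Matrix.mulVec_diagonal]; rfl
    rw [h4]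
    simp only [dotProduct]
    refine Finset.sum_congr rfl fun k _ => ?_
    ring
  · intro k
    rw [hstar]
    simp only [Matrix.mulVec, dotProduct, Matrix.transpose_apply]
    rfl

end CharpolyAux

section LapAux

variable {n : ℕ} (G : SimpleGraph (Fin n)) [DecidableRel G.Adj]

lemma my_lap_diag (a : Fin n) : (G.lapMatrix ℝ) a a = (G.degree a : ℝ) := by
  simp [SimpleGraph.lapMatrix, SimpleGraph.degMatrix]

lemma my_lap_off {a b : Fin n} (hab : a ≠ b) :
    (G.lapMatrix ℝ) a b = if G.Adj a b then (-1 : ℝ) else 0 := by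
  simp only [SimpleGraph.lapMatrix, SimpleGraph.degMatrix, Matrix.sub_apply,
    Matrix.diagonal_apply_ne _ hab, SimpleGraph.adjMatrix_apply]
  split_ifs <;> ring

/-- The test vector used throughout. -/
noncomputable def tvec (n : ℕ) (a b : Fin n) (c d : ℝ) : Fin n → ℝ :=
  fun w => -1 + ((if w = a then c else 0) + (if w = b then d else 0))

lemma tvec_sum (a b : Fin n) (c d : ℝ) :
    ∑ w, tvec n a b c d w = -(n : ℝ) + c + d := by
  unfold tvec
  rw [Finset.sum_add_distrib, Finset.sum_add_distrib]
  rw [Finset.sum_ite_eq' Finset.univ a (fun _ => c), Finset.sum_ite_eq' Finset.univ b (fun _ => d)]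
  simp [Finset.card_univ]
  ring

lemma tvec_norm (a b : Fin n) (hab : a ≠ b) (c d : ℝ) :
    tvec n a b c d ⬝ᵥ tvec n a b c d = (n : ℝ) - 2*c - 2*d + c^2 + d^2 := by
  have h : ∀ w, tvec n a b c d w * tvec n a b c d w
      = 1 + ((if w = a then c^2 - 2*c else 0) + (if w = b then d^2 - 2*d else 0)) := by
    intro w
    unfold tvec
    rcases eq_or_ne w a with rfl | h1
    · rcases eq_or_ne w b with rfl | h2
      · exact absurd rfl hab
      · simp [h2]; ring
    · rcases eq_or_ne w b with rfl | h2
      · simp [h1]; ring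
      · simp [h1, h2]
  rw [dotProduct, Finset.sum_congr rfl fun w _ => h w]
  rw [Finset.sum_add_distrib, Finset.sum_add_distrib]
  rw [Finset.sum_ite_eq' Finset.univ a, Finset.sum_ite_eq' Finset.univ b]
  simp [Finset.card_univ]
  ring

lemma my_ones_lap (z : Fin n → ℝ) :
    (fun _ => (1:ℝ)) ⬝ᵥ (G.lapMatrix ℝ *ᵥ z) = 0 := by
  rw [Matrix.dotProduct_mulVec]
  have h : (fun _ => (1:ℝ)) ᵥ* G.lapMatrix ℝ = 0 := by
    have hs : (G.lapMatrix ℝ)ᵀ = G.lapMatrix ℝ := G.isSymm_lapMatrix (R := ℝ)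
    calc (fun _ => (1:ℝ)) ᵥ* G.lapMatrix ℝ
        = (G.lapMatrix ℝ)ᵀ *ᵥ (fun _ => (1:ℝ)) := (Matrix.mulVec_transpose _ _).symm
      _ = G.lapMatrix ℝ *ᵥ (fun _ => (1:ℝ)) := by rw [hs]
      _ = 0 := G.lapMatrix_mulVec_const_eq_zero
  rw [h, zero_dotProduct]

lemma tvec_split (a b : Fin n) (c d : ℝ) :
    tvec n a b c d
      = (-1:ℝ) • ((fun _ => (1:ℝ)) : Fin n → ℝ)
        + (c • (Pi.single a (1:ℝ) : Fin n → ℝ) + d • (Pi.single b (1:ℝ) : Fin n → ℝ)) := by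
  funext w
  simp only [tvec, Pi.add_apply, Pi.smul_apply, Pi.single_apply, smul_eq_mul, mul_ite,
    mul_one, mul_zero]

lemma tvec_form (a b : Fin n) (c d : ℝ) :
    tvec n a b c d ⬝ᵥ (G.lapMatrix ℝ *ᵥ tvec n a b c d)
      = c^2 * (G.lapMatrix ℝ) a a + 2*c*d*(G.lapMatrix ℝ) a b + d^2 * (G.lapMatrix ℝ) b b := by
  have hs : (G.lapMatrix ℝ)ᵀ = G.lapMatrix ℝ := G.isSymm_lapMatrix (R := ℝ)
  have hsym : (G.lapMatrix ℝ) b a = (G.lapMatrix ℝ) a b :=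
    calc (G.lapMatrix ℝ) b a = (G.lapMatrix ℝ)ᵀ a b := rfl
      _ = (G.lapMatrix ℝ) a b := by rw [hs]
  rw [tvec_split]
  rw [Matrix.mulVec_add, Matrix.mulVec_smul, G.lapMatrix_mulVec_const_eq_zero, smul_zero,
    zero_add, Matrix.mulVec_add, Matrix.mulVec_smul, Matrix.mulVec_smul]
  simp only [add_dotProduct, smul_dotProduct, dotProduct_add,
    dotProduct_smul, my_ones_lap, Matrix.mulVec_single, single_dotProduct,
    smul_eq_mul, mul_one]
  have hcol : ∀ e : Fin n, ((fun _ => (1:ℝ)) ⬝ᵥ fun i => G.lapMatrix ℝ i e) = 0 := by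
    intro e
    simp only [dotProduct, one_mul]
    calc ∑ i, G.lapMatrix ℝ i e = ∑ i, G.lapMatrix ℝ e i :=
          Finset.sum_congr rfl fun i _ => by
            calc G.lapMatrix ℝ i e = (G.lapMatrix ℝ)ᵀ e i := rfl
              _ = G.lapMatrix ℝ e i := by rw [hs]
      _ = (G.lapMatrix ℝ *ᵥ fun _ => (1:ℝ)) e := by simp [Matrix.mulVec, dotProduct]
      _ = 0 := by rw [G.lapMatrix_mulVec_const_eq_zero]; rfl
  simp only [MulOpposite.op_one, one_smul, one_mul,
    show ∀ e, (fun _ => (1:ℝ)) ⬝ᵥ (G.lapMatrix ℝ).col e = 0 from hcol,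
    show ∀ p q, (G.lapMatrix ℝ).col p q = G.lapMatrix ℝ q p from fun _ _ => rfl, hsym]
  ring

lemma my_key_lower (hconn : G.Connected)
    (hroots : ∀ r ∈ (G.lapMatrix ℝ).charpoly.roots, r = 0 ∨ 1 ≤ r)
    (x : Fin n → ℝ) (hx : ∑ k, x k = 0) :
    x ⬝ᵥ x ≤ x ⬝ᵥ (G.lapMatrix ℝ *ᵥ x) := by
  have hA : (G.lapMatrix ℝ).IsHermitian := (SimpleGraph.posSemidef_lapMatrix ℝ G).1
  obtain ⟨y, hnorm, hform, hy⟩ := my_quad_decomp hA x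
  rw [hnorm, hform]
  refine Finset.sum_le_sum fun k _ => ?_
  have hmem : hA.eigenvalues k ∈ (G.lapMatrix ℝ).charpoly.roots := by
    rw [my_roots_hermitian hA]
    exact Multiset.mem_map_of_mem _ (Finset.mem_univ k)
  rcases hroots _ hmem with h0 | h1
  · have hvec := hA.mulVec_eigenvectorBasis k
    rw [h0, zero_smul] at hvec
    have h2 := (G.lapMatrix_mulVec_eq_zero_iff_forall_reachable
      (x := (hA.eigenvectorBasis k : Fin n → ℝ))).mp (by exact hvec)
    have hconst : ∀ p q : Fin n, (hA.eigenvectorBasis k : Fin n → ℝ) p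
        = (hA.eigenvectorBasis k : Fin n → ℝ) q := fun p q => h2 p q (hconn.preconnected p q)
    have hyk : y k = 0 := by
      rw [hy k]
      obtain ⟨j0⟩ : Nonempty (Fin n) := hconn.nonempty
      rw [dotProduct]
      calc ∑ j, (hA.eigenvectorBasis k : Fin n → ℝ) j * x j
          = ∑ j, (hA.eigenvectorBasis k : Fin n → ℝ) j0 * x j :=
            Finset.sum_congr rfl fun j _ => by rw [hconst j j0]
        _ = (hA.eigenvectorBasis k : Fin n → ℝ) j0 * ∑ j, x j := by rw [Finset.mul_sum]
        _ = 0 := by rw [hx, mul_zero]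
    rw [h0, hyk]
    norm_num
  · nlinarith [sq_nonneg (y k)]

lemma my_key_upper (c : ℝ)
    (hroots : ∀ r ∈ (G.lapMatrix ℝ).charpoly.roots, r ≤ c)
    (x : Fin n → ℝ) :
    x ⬝ᵥ (G.lapMatrix ℝ *ᵥ x) ≤ c * (x ⬝ᵥ x) := by
  have hA : (G.lapMatrix ℝ).IsHermitian := (SimpleGraph.posSemidef_lapMatrix ℝ G).1
  obtain ⟨y, hnorm, hform, hy⟩ := my_quad_decomp hA x
  rw [hnorm, hform, Finset.mul_sum]
  refine Finset.sum_le_sum fun k _ => ?_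
  have hmem : hA.eigenvalues k ∈ (G.lapMatrix ℝ).charpoly.roots := by
    rw [my_roots_hermitian hA]
    exact Multiset.mem_map_of_mem _ (Finset.mem_univ k)
  exact mul_le_mul_of_nonneg_right (hroots _ hmem) (sq_nonneg _)

end LapAux

section SijAux

lemma lapSpec_eq {V : Type} [Fintype V] [DecidableEq V] (G : SimpleGraph V)
    [inst : DecidableRel G.Adj] :
    lapSpec G = (G.lapMatrix ℝ).charpoly.roots := by
  unfold lapSpec
  congr!

lemma sijset_eq (n i j m : ℕ) :
    SijSet n i j m
      = (m:ℝ) ::ₘ (((Multiset.range (n+1)).map (Nat.cast : ℕ → ℝ)) - {(i:ℝ), (j:ℝ)}) := by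
  unfold SijSet
  congr 1
  congr 1
  rw [Multiset.map_id']
  show (Multiset.range (n+1)).bind (fun a => pure ((a : ℕ) : ℝ)) = _
  rw [show (fun a : ℕ => (pure ((a:ℕ):ℝ) : Multiset ℝ))
      = fun a : ℕ => ({((a:ℕ):ℝ)} : Multiset ℝ) from rfl]
  rw [Multiset.bind_singleton]

variable {n i : ℕ} (h1 : 1 < i) (hin : i < n)
include h1 hin

lemma sij_count_n : Multiset.count ((n:ℝ)) (SijSet n i n 1) = 0 := by
  rw [sijset_eq]
  have hne1 : ((n:ℝ)) ≠ (((1:ℕ)):ℝ) := by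
    intro h; exact absurd (Nat.cast_injective h) (by omega)
  rw [Multiset.count_cons_of_ne hne1, Multiset.count_sub]
  have hcM : Multiset.count ((n:ℝ)) ((Multiset.range (n + 1)).map (Nat.cast : ℕ → ℝ)) = 1 := by
    rw [Multiset.count_map_eq_count' _ _ Nat.cast_injective]
    exact Multiset.count_eq_one_of_mem (Multiset.nodup_range _)
      (Multiset.mem_range.mpr (by omega))
  have hcP : Multiset.count ((n:ℝ)) ({(i : ℝ), (n : ℝ)} : Multiset ℝ) = 1 := by
    have hne : ((n:ℝ)) ≠ ((i:ℕ):ℝ) := by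
      intro h; exact absurd (Nat.cast_injective h) (by omega)
    rw [Multiset.insert_eq_cons, Multiset.count_cons_of_ne hne, Multiset.count_singleton,
      if_pos rfl]
  rw [hcM, hcP]

lemma notmem_n : ((n:ℝ)) ∉ SijSet n i n 1 :=
  Multiset.count_eq_zero.mp (sij_count_n h1 hin)

set_option linter.unusedSectionVars false in
lemma sij_low : ∀ r ∈ SijSet n i n 1, r = 0 ∨ 1 ≤ r := by
  intro r hr
  rw [sijset_eq] at hr
  rcases Multiset.mem_cons.mp hr with h | h
  · right; rw [h, Nat.cast_one]
  · have hrM : r ∈ (Multiset.range (n + 1)).map (Nat.cast : ℕ → ℝ) :=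
      Multiset.mem_of_le (Multiset.sub_le_self _ _) h
    obtain ⟨k, _, rfl⟩ := Multiset.mem_map.mp hrM
    rcases Nat.eq_zero_or_pos k with h0 | h1'
    · left; rw [h0, Nat.cast_zero]
    · right; exact_mod_cast h1'

lemma sij_high : ∀ r ∈ SijSet n i n 1, r ≤ (n : ℝ) - 1 := by
  intro r hr
  have hn3 : 3 ≤ n := by omega
  have hrr := hr
  rw [sijset_eq] at hr
  rcases Multiset.mem_cons.mp hr with h | h
  · rw [h, Nat.cast_one]
    have : (3:ℝ) ≤ (n:ℝ) := by exact_mod_cast hn3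
    linarith
  · have hrM : r ∈ (Multiset.range (n + 1)).map (Nat.cast : ℕ → ℝ) :=
      Multiset.mem_of_le (Multiset.sub_le_self _ _) h
    obtain ⟨k, hk, rfl⟩ := Multiset.mem_map.mp hrM
    have hkn : k < n + 1 := Multiset.mem_range.mp hk
    have hkne : k ≠ n := by
      rintro rfl
      exact absurd hrr (notmem_n h1 hin)
    have hk1 : k ≤ n - 1 := by omega
    have hk2 : (k:ℝ) ≤ ((n-1 : ℕ) : ℝ) := by exact_mod_cast hk1
    rw [Nat.cast_sub (by omega)] at hk2
    exact_mod_cast hk2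

end SijAux

/-- If `1 < i < n` and a graph `G` on `n` vertices realizes `S_{{i,n}_n^1}`, then every
vertex has degree at least `2` and at most `n - 3`; in particular there is no pendant
vertex. -/
theorem stmt8 {n i : ℕ} (h1 : 1 < i) (hin : i < n) (G : SimpleGraph (Fin n))
    [DecidableRel G.Adj] (hG : Realizes G (SijSet n i n 1)) :
    (∀ v : Fin n, 2 ≤ G.degree v ∧ G.degree v ≤ n - 3) ∧
    ∀ v : Fin n, G.degree v ≠ 1 := by
  obtain ⟨hconn, hspec⟩ := hG
  have hn3 : 3 ≤ n := by omega
  have hn3R : (3:ℝ) ≤ (n:ℝ) := by exact_mod_cast hn3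
  have hroots : (G.lapMatrix ℝ).charpoly.roots = SijSet n i n 1 := by
    rw [← lapSpec_eq]; exact hspec
  have hlow : ∀ r ∈ (G.lapMatrix ℝ).charpoly.roots, r = 0 ∨ 1 ≤ r := by
    rw [hroots]; exact sij_low h1 hin
  have hup : ∀ r ∈ (G.lapMatrix ℝ).charpoly.roots, r ≤ (n:ℝ) - 1 := by
    rw [hroots]; exact sij_high h1 hin
  -- every degree is positive
  have hdeg1 : ∀ v : Fin n, 0 < G.degree v := by
    intro v
    rw [SimpleGraph.degree_pos_iff_exists_adj]
    obtain ⟨u, hu⟩ := Fintype.exists_ne_of_one_lt_card (by rw [Fintype.card_fin]; omega) v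
    obtain ⟨p⟩ := hconn.preconnected v u
    cases p with
    | nil => exact absurd rfl hu
    | cons hadj _ => exact ⟨_, hadj⟩
  -- no vertex of degree `n - 1`
  have hdom : ∀ v : Fin n, G.degree v ≤ n - 2 := by
    intro v
    by_contra hcon
    push_neg at hcon
    have hlt := G.degree_lt_card_verts v
    rw [Fintype.card_fin] at hlt
    have hdeg : G.degree v = n - 1 := by omega
    obtain ⟨b, hadjvb⟩ := (SimpleGraph.degree_pos_iff_exists_adj _ _).mp (hdeg1 v)
    have hvb : v ≠ b := G.ne_of_adj hadjvb
    have hub := my_key_upper G ((n:ℝ)-1) hup (tvec n v b ((n:ℝ)-1) 1)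
    rw [tvec_form, tvec_norm v b hvb, my_lap_diag, my_lap_diag,
      my_lap_off G hvb, if_pos hadjvb] at hub
    have hdegR : (G.degree v : ℝ) = (n:ℝ) - 1 := by
      rw [hdeg, Nat.cast_sub (by omega : 1 ≤ n), Nat.cast_one]
    have hdbR : (1:ℝ) ≤ (G.degree b : ℝ) := by exact_mod_cast hdeg1 b
    rw [hdegR] at hub
    nlinarith [hub, hdbR, hn3R, mul_nonneg (by linarith : (0:ℝ) ≤ (n:ℝ)-1)
      (by linarith : (0:ℝ) ≤ (n:ℝ)-3)]
  -- no pendant vertex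
  have hpend : ∀ v : Fin n, G.degree v ≠ 1 := by
    intro v hdeg
    obtain ⟨u, hu⟩ := Finset.card_eq_one.mp (hdeg : (G.neighborFinset v).card = 1)
    have hadjvu : G.Adj v u := by
      rw [← SimpleGraph.mem_neighborFinset, hu]
      exact Finset.mem_singleton_self u
    have hvu : v ≠ u := G.ne_of_adj hadjvu
    have hQL := my_key_lower G hconn hlow (tvec n v u ((n:ℝ)-1) 1)
      (by rw [tvec_sum]; ring)
    rw [tvec_form, tvec_norm v u hvu, my_lap_diag, my_lap_diag,
      my_lap_off G hvu, if_pos hadjvu] at hQL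
    have hdegR : (G.degree v : ℝ) = 1 := by exact_mod_cast hdeg
    have hdu : (G.degree u : ℝ) ≤ (n:ℝ) - 2 := by
      have h2 : (G.degree u : ℝ) ≤ ((n-2:ℕ):ℝ) := by exact_mod_cast hdom u
      rwa [Nat.cast_sub (by omega : 2 ≤ n), Nat.cast_two] at h2
    rw [hdegR] at hQL
    nlinarith [hQL, hdu]
  -- no vertex of degree `n - 2`
  have hd2 : ∀ v : Fin n, G.degree v ≠ n - 2 := by
    intro v hdeg
    have hex : ∃ w : Fin n, w ≠ v ∧ ¬ G.Adj v w := by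
      by_contra hcon
      push_neg at hcon
      have hsub : Finset.univ.erase v ⊆ G.neighborFinset v := by
        intro w hw
        rw [SimpleGraph.mem_neighborFinset]
        exact hcon w (Finset.mem_erase.mp hw).1
      have hcard := Finset.card_le_card hsub
      rw [Finset.card_erase_of_mem (Finset.mem_univ v), Finset.card_univ,
        Fintype.card_fin] at hcard
      have hnd : (G.neighborFinset v).card = G.degree v := rfl
      omega
    obtain ⟨w, hwv, hnadj⟩ := hex
    have hub := my_key_upper G ((n:ℝ)-1) hup (tvec n v w ((n:ℝ)-1) 1)
    rw [tvec_form, tvec_norm v w (Ne.symm hwv), my_lap_diag, my_lap_diag,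
      my_lap_off G (Ne.symm hwv), if_neg hnadj] at hub
    have hdegR : (G.degree v : ℝ) = (n:ℝ) - 2 := by
      rw [hdeg, Nat.cast_sub (by omega : 2 ≤ n), Nat.cast_two]
    have hdw : (1:ℝ) ≤ (G.degree w : ℝ) := by exact_mod_cast hdeg1 w
    rw [hdegR] at hub
    nlinarith [hub, hdw, hn3R]
  refine ⟨fun v => ⟨?_, ?_⟩, hpend⟩
  · have := hdeg1 v
    have := hpend v
    omega
  · have := hdom v
    have := hd2 v
    omega
end
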